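/- The lower bound problem value d^inf = sup over 0 ≤ ξ ≤ e of [ Σᵢ wᵢpᵢξᵢ − max_i ξᵢ(K₀ − wᵢKᵢ)₊ ] equals, by LP duality, inf over ν ≥ 0 with Σνᵢ = 1 of Σᵢ ( wᵢpᵢ − νᵢ(K₀ − wᵢKᵢ)₊ )₊. -/

import Mathlib

open MeasureTheory Filter

theorem lp_aux {n : ℕ} (hn : 0 < n) (a b : Fin n → ℝ)
    (ha : ∀ i, 0 ≤ a i) (hb : ∀ i, 0 ≤ b i) :
    sSup {v : ℝ | ∃ ξ : Fin n → ℝ, (∀ i, ξ i ∈ Set.Icc (0:ℝ) 1) ∧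
        v = ∑ i, a i * ξ i -
          Finset.univ.sup' ⟨⟨0, hn⟩, Finset.mem_univ _⟩ (fun i => ξ i * b i)} =
    sInf {v : ℝ | ∃ ν : Fin n → ℝ, (∀ i, 0 ≤ ν i) ∧ (∑ i, ν i = 1) ∧
        v = ∑ i, max (a i - ν i * b i) 0} := by
  have hne : (Finset.univ : Finset (Fin n)).Nonempty := ⟨⟨0, hn⟩, Finset.mem_univ _⟩
  -- weak duality
  have weak : ∀ ξ ν : Fin n → ℝ, (∀ i, ξ i ∈ Set.Icc (0:ℝ) 1) → (∀ i, 0 ≤ ν i) →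
      (∑ i, ν i = 1) →
      ∑ i, a i * ξ i - Finset.univ.sup' hne (fun i => ξ i * b i)
        ≤ ∑ i, max (a i - ν i * b i) 0 := by
    intro ξ ν hξ hν hν1
    have h1 : ∑ i, ν i * (ξ i * b i) ≤ Finset.univ.sup' hne (fun i => ξ i * b i) := by
      calc ∑ i, ν i * (ξ i * b i)
          ≤ ∑ i, ν i * Finset.univ.sup' hne (fun i => ξ i * b i) := by
            apply Finset.sum_le_sum
            intro i _
            exact mul_le_mul_of_nonneg_left (Finset.le_sup' (fun i => ξ i * b i) (Finset.mem_univ i)) (hν i)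
        _ = Finset.univ.sup' hne (fun i => ξ i * b i) := by
            rw [← Finset.sum_mul, hν1, one_mul]
    have h2 : ∑ i, (a i * ξ i - ν i * (ξ i * b i)) ≤ ∑ i, max (a i - ν i * b i) 0 := by
      apply Finset.sum_le_sum
      intro i _
      have h3 := (hξ i).1
      have h4 := (hξ i).2
      have h5 := le_max_left (a i - ν i * b i) (0:ℝ)
      have h6 := le_max_right (a i - ν i * b i) (0:ℝ)
      nlinarith
    rw [Finset.sum_sub_distrib] at h2
    linarith
  -- strong duality: a common optimal value
  have key : ∃ ξ ν : Fin n → ℝ, (∀ i, ξ i ∈ Set.Icc (0:ℝ) 1) ∧ (∀ i, 0 ≤ ν i) ∧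
      (∑ i, ν i = 1) ∧
      ∑ i, a i * ξ i - Finset.univ.sup' hne (fun i => ξ i * b i)
        = ∑ i, max (a i - ν i * b i) 0 := by
    set c : Fin n → ℝ := fun i => if 0 < b i then a i / b i else 0 with hc_def
    have hc : ∀ i, 0 ≤ c i := by
      intro i
      simp only [hc_def]
      split_ifs with h
      · exact div_nonneg (ha i) (hb i)
      · exact le_refl 0
    have hcb : ∀ i, 0 < b i → c i * b i = a i := by
      intro i h
      simp only [hc_def, if_pos h]
      field_simp
    have hn' : (0:ℝ) < n := by exact_mod_cast hn
    by_cases hcase : ∑ i, c i ≤ 1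
    · -- Case A
      refine ⟨fun i => if b i = 0 then 1 else 0,
        fun i => c i + (1 - ∑ j, c j) / n, ?_, ?_, ?_, ?_⟩
      · intro i
        dsimp only
        rw [Set.mem_Icc]
        constructor <;> split_ifs <;> norm_num
      · intro i
        dsimp only
        have : 0 ≤ (1 - ∑ j, c j) / n := div_nonneg (by linarith) hn'.le
        linarith [hc i]
      · dsimp only
        rw [Finset.sum_add_distrib, Finset.sum_const, Finset.card_univ, Fintype.card_fin,
          nsmul_eq_mul]
        field_simp
        ring
      · dsimp only
        have hz : (fun i => (if b i = 0 then (1:ℝ) else 0) * b i) = fun _ => (0:ℝ) := by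
          funext i
          split_ifs with h
          · rw [h, mul_zero]
          · rw [zero_mul]
        rw [hz, Finset.sup'_const, sub_zero]
        apply Finset.sum_congr rfl
        intro i _
        by_cases h : b i = 0
        · rw [if_pos h, h, mul_zero, sub_zero, mul_one, max_eq_left (ha i)]
        · have hbi : 0 < b i := lt_of_le_of_ne (hb i) (Ne.symm h)
          rw [if_neg h, mul_zero]
          have hnum : a i - (c i + (1 - ∑ j, c j) / n) * b i = -((1 - ∑ j, c j) / n * b i) := by
            have := hcb i hbi
            ring_nf
            nlinarith [hcb i hbi]
          rw [max_eq_right]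
          nlinarith [div_nonneg (show (0:ℝ) ≤ 1 - ∑ j, c j by linarith) hn'.le, hcb i hbi,
            mul_nonneg (div_nonneg (show (0:ℝ) ≤ 1 - ∑ j, c j by linarith) hn'.le) (hb i)]
    · -- Case B
      push_neg at hcase
      have h0 : ∑ i ∈ Finset.univ.filter (fun i => (0:ℝ) < b i), c i = ∑ i, c i := by
        rw [Finset.sum_filter]
        apply Finset.sum_congr rfl
        intro i _
        split_ifs with h
        · rfl
        · simp only [hc_def, if_neg h]
      set Tset := Finset.univ.filter
        (fun j => (∑ i ∈ Finset.univ.filter (fun i => b j < b i), c i) ≤ 1) with hTset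
      have hTne : Tset.Nonempty := by
        obtain ⟨j0, -, hj0⟩ := Finset.exists_mem_eq_sup' hne b
        refine ⟨j0, Finset.mem_filter.mpr ⟨Finset.mem_univ _, ?_⟩⟩
        have hemp : Finset.univ.filter (fun i => b j0 < b i) = ∅ := by
          apply Finset.filter_eq_empty_iff.mpr
          intro i _
          have : b i ≤ b j0 := by
            rw [← hj0]
            exact Finset.le_sup' b (Finset.mem_univ i)
          linarith
        rw [hemp, Finset.sum_empty]
        norm_num
      obtain ⟨jstar, hjT, hjmin⟩ := Finset.exists_mem_eq_inf' hTne b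
      set tstar := b jstar with htstar
      have hmin : ∀ j ∈ Tset, tstar ≤ b j := by
        intro j hj
        exact hjmin.symm.trans_le (Finset.inf'_le b hj)
      have hjA : ∑ i ∈ Finset.univ.filter (fun i => tstar < b i), c i ≤ 1 :=
        (Finset.mem_filter.mp hjT).2
      have htpos : 0 < tstar := by
        rcases (hb jstar).lt_or_eq with h | h
        · exact h
        · exfalso
          rw [htstar] at hjA
          rw [← h] at hjA
          rw [h0] at hjA
          linarith
      set A := ∑ i ∈ Finset.univ.filter (fun i => tstar < b i), c i with hA
      set M := ∑ i ∈ Finset.univ.filter (fun i => b i = tstar), c i with hM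
      have hM0 : 0 ≤ M := Finset.sum_nonneg fun i _ => hc i
      have hsplit : ∑ i ∈ Finset.univ.filter (fun i => tstar ≤ b i), c i = A + M := by
        rw [hA, hM, Finset.sum_filter, Finset.sum_filter, Finset.sum_filter,
          ← Finset.sum_add_distrib]
        apply Finset.sum_congr rfl
        intro i _
        by_cases h1 : tstar < b i
        · rw [if_pos h1.le, if_pos h1, if_neg (ne_of_gt h1), add_zero]
        · by_cases h2 : b i = tstar
          · rw [if_pos (le_of_eq h2.symm), if_neg h1, if_pos h2, zero_add]
          · rw [if_neg (fun hle => h2 (le_antisymm (not_lt.mp h1) hle)), if_neg h1,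
              if_neg h2, add_zero]
      have hge : 1 ≤ A + M := by
        rw [← hsplit]
        by_cases hU : (Finset.univ.filter (fun j => b j < tstar)).Nonempty
        · obtain ⟨j', hj'U, hj'⟩ := Finset.exists_mem_eq_sup' hU b
          have hj'lt : b j' < tstar := (Finset.mem_filter.mp hj'U).2
          have hj'not : j' ∉ Tset := by
            intro hmem
            have := hmin j' hmem
            linarith
          have hj'gt : 1 < ∑ i ∈ Finset.univ.filter (fun i => b j' < b i), c i := by
            by_contra hle
            push_neg at hle
            exact hj'not (Finset.mem_filter.mpr ⟨Finset.mem_univ _, hle⟩)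
          have hsub : Finset.univ.filter (fun i => b j' < b i) ⊆
              Finset.univ.filter (fun i => tstar ≤ b i) := by
            intro i hi
            rw [Finset.mem_filter] at hi ⊢
            refine ⟨Finset.mem_univ _, ?_⟩
            by_contra hlt
            push_neg at hlt
            have hiU : i ∈ Finset.univ.filter (fun j => b j < tstar) :=
              Finset.mem_filter.mpr ⟨Finset.mem_univ _, hlt⟩
            have hle2 : b i ≤ b j' := by
              rw [← hj']
              exact Finset.le_sup' b hiU
            linarith [hi.2]
          exact le_trans hj'gt.le
            (Finset.sum_le_sum_of_subset_of_nonneg hsub (fun i _ _ => hc i))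
        · have hallge : ∀ i, tstar ≤ b i := by
            intro i
            by_contra h
            push_neg at h
            exact hU ⟨i, Finset.mem_filter.mpr ⟨Finset.mem_univ _, h⟩⟩
          rw [Finset.filter_true_of_mem (fun i _ => hallge i)]
          linarith
      set sl := 1 - A with hsl
      have hsl0 : 0 ≤ sl := by rw [hsl]; linarith
      have hslM : sl ≤ M := by rw [hsl]; linarith
      -- c i = a i / tstar on the tstar-level set, and a i = tstar * c i there
      have hcts : ∀ i, b i = tstar → a i = tstar * c i := by
        intro i h
        have hbi : 0 < b i := by rw [h]; exact htpos
        have := hcb i hbi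
        rw [h] at this
        linarith [this]
      refine ⟨fun i => if b i ≤ tstar then 1 else tstar / b i,
        fun i => if tstar < b i then c i else if b i = tstar then sl * c i / M else 0,
        ?_, ?_, ?_, ?_⟩
      · intro i
        dsimp only
        rw [Set.mem_Icc]
        constructor
        · split_ifs with h
          · norm_num
          · exact div_nonneg htpos.le (hb i)
        · split_ifs with h
          · exact le_refl 1
          · push_neg at h
            exact (div_le_one (by linarith)).mpr h.le
      · intro i
        dsimp only
        split_ifs with h1 h2
        · exact hc i
        · exact div_nonneg (mul_nonneg hsl0 (hc i)) hM0
        · exact le_refl 0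
      · dsimp only
        have hsum : ∑ i, (if tstar < b i then c i else if b i = tstar then sl * c i / M else 0)
            = A + ∑ i ∈ Finset.univ.filter (fun i => b i = tstar), sl * c i / M := by
          rw [hA, Finset.sum_filter, Finset.sum_filter, ← Finset.sum_add_distrib]
          apply Finset.sum_congr rfl
          intro i _
          by_cases h1 : tstar < b i
          · rw [if_pos h1, if_pos h1, if_neg (ne_of_gt h1), add_zero]
          · rw [if_neg h1, if_neg h1]
            by_cases h2 : b i = tstar
            · rw [if_pos h2, zero_add]
            · rw [if_neg h2, add_zero]
        rw [hsum]
        by_cases hMz : M = 0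
        · have hsl_z : sl = 0 := le_antisymm (hMz ▸ hslM) hsl0
          have hzero : ∑ i ∈ Finset.univ.filter (fun i => b i = tstar), sl * c i / M = 0 := by
            apply Finset.sum_eq_zero
            intro i _
            rw [hsl_z, zero_mul, zero_div]
          rw [hzero]
          rw [hsl] at hsl_z
          linarith
        · have hterm : ∑ i ∈ Finset.univ.filter (fun i => b i = tstar), sl * c i / M
              = sl / M * M := by
            rw [Finset.sum_congr rfl (fun i _ => show sl * c i / M = sl / M * c i by ring),
              ← Finset.mul_sum, ← hM]
          rw [hterm, div_mul_cancel₀ _ hMz, hsl]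
          ring
      · dsimp only
        have hsup : Finset.univ.sup' hne
            (fun i => (if b i ≤ tstar then (1:ℝ) else tstar / b i) * b i) = tstar := by
          apply le_antisymm
          · apply Finset.sup'_le
            intro i _
            split_ifs with h
            · linarith [one_mul (b i)]
            · push_neg at h
              rw [div_mul_cancel₀ tstar (show b i ≠ 0 by intro hz; rw [hz] at h; linarith)]
          · have hle := Finset.le_sup'
              (fun i => (if b i ≤ tstar then (1:ℝ) else tstar / b i) * b i)
              (Finset.mem_univ jstar)
            simp only [← htstar, if_pos (le_refl tstar), one_mul] at hle
            exact hle
        rw [hsup]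
        have hkey : ∑ i, (a i * (if b i ≤ tstar then (1:ℝ) else tstar / b i)
            - max (a i - (if tstar < b i then c i else if b i = tstar then sl * c i / M else 0)
                * b i) 0) = tstar := by
          have hpt : ∀ i, a i * (if b i ≤ tstar then (1:ℝ) else tstar / b i)
              - max (a i - (if tstar < b i then c i else if b i = tstar then sl * c i / M else 0)
                  * b i) 0
              = (if tstar < b i then tstar * c i else 0)
                + (if b i = tstar then sl * tstar * c i / M else 0) := by
            intro i
            by_cases h1 : tstar < b i
            · have hbi : 0 < b i := lt_trans htpos h1
              rw [if_neg (not_le.mpr h1), if_pos h1, if_pos h1, if_neg (ne_of_gt h1), add_zero,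
                hcb i hbi, sub_self, max_self, sub_zero]
              simp only [hc_def, if_pos hbi]
              field_simp
            · by_cases h2 : b i = tstar
              · have hai : a i = tstar * c i := hcts i h2
                rw [if_pos (le_of_eq h2), if_neg h1, if_pos h2, if_pos h2, mul_one, h2]
                by_cases hMz : M = 0
                · have hci_z : c i = 0 := by
                    have := Finset.sum_eq_zero_iff_of_nonneg
                      (fun j (_ : j ∈ Finset.univ.filter (fun j => b j = tstar)) => hc j)
                    rw [← hM] at this
                    exact this.mp hMz i (Finset.mem_filter.mpr ⟨Finset.mem_univ _, h2⟩)
                  have hzero : a i = 0 := by rw [hai, hci_z, mul_zero]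
                  rw [hzero, hci_z]
                  simp
                · have hMpos : 0 < M := lt_of_le_of_ne hM0 (Ne.symm hMz)
                  have hmax : max (a i - sl * c i / M * tstar) 0 = a i - sl * c i / M * tstar := by
                    apply max_eq_left
                    rw [hai, sub_nonneg, div_mul_eq_mul_div, div_le_iff₀ hMpos]
                    nlinarith [mul_nonneg (mul_nonneg htpos.le (hc i)) (sub_nonneg.mpr hslM)]
                  rw [hmax, if_neg (lt_irrefl tstar), zero_add]
                  ring
              · have h3 : b i < tstar := lt_of_le_of_ne (not_lt.mp h1) h2
                rw [if_pos h3.le, if_neg h1, if_neg h2, if_neg h1, if_neg h2, mul_one, zero_mul,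
                  sub_zero, max_eq_left (ha i), sub_self, add_zero]
          rw [Finset.sum_congr rfl (fun i _ => hpt i), Finset.sum_add_distrib]
          have hfirst : ∑ i, (if tstar < b i then tstar * c i else 0) = tstar * A := by
            rw [hA, Finset.mul_sum, Finset.sum_filter]
          have hsecond : ∑ i, (if b i = tstar then sl * tstar * c i / M else 0)
              = sl * tstar := by
            rw [← Finset.sum_filter]
            by_cases hMz : M = 0
            · have hsl_z : sl = 0 := le_antisymm (hMz ▸ hslM) hsl0
              rw [hsl_z]
              simp
            · rw [Finset.sum_congr rfl
                (fun i _ => show sl * tstar * c i / M = sl * tstar / M * c i by ring),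
                ← Finset.mul_sum, ← hM]
              field_simp
          rw [hfirst, hsecond, hsl]
          ring
        rw [Finset.sum_sub_distrib] at hkey
        linarith
  -- conclude
  obtain ⟨ξ₀, ν₀, hξ₀, hν₀, hν₀1, heq⟩ := key
  set v := ∑ i, a i * ξ₀ i - Finset.univ.sup' hne (fun i => ξ₀ i * b i) with hv
  have hvS : v ∈ {v : ℝ | ∃ ξ : Fin n → ℝ, (∀ i, ξ i ∈ Set.Icc (0:ℝ) 1) ∧
      v = ∑ i, a i * ξ i -
        Finset.univ.sup' ⟨⟨0, hn⟩, Finset.mem_univ _⟩ (fun i => ξ i * b i)} :=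
    ⟨ξ₀, hξ₀, rfl⟩
  have hvT : v ∈ {v : ℝ | ∃ ν : Fin n → ℝ, (∀ i, 0 ≤ ν i) ∧ (∑ i, ν i = 1) ∧
      v = ∑ i, max (a i - ν i * b i) 0} := ⟨ν₀, hν₀, hν₀1, heq⟩
  apply le_antisymm
  · apply csSup_le ⟨v, hvS⟩
    intro x hx
    obtain ⟨ξ, hξ, rfl⟩ := hx
    apply le_csInf ⟨v, hvT⟩
    intro y hy
    obtain ⟨ν, hν, hν1, rfl⟩ := hy
    exact weak ξ ν hξ hν hν1
  · have h1 : sInf {v : ℝ | ∃ ν : Fin n → ℝ, (∀ i, 0 ≤ ν i) ∧ (∑ i, ν i = 1) ∧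
        v = ∑ i, max (a i - ν i * b i) 0} ≤ v := by
      apply csInf_le
      · refine ⟨v - 1 - 1, ?_⟩
        intro y hy
        obtain ⟨ν, hν, hν1, rfl⟩ := hy
        have := weak ξ₀ ν hξ₀ hν hν1
        rw [← hv] at this
        linarith
      · exact hvT
    have h2 : v ≤ sSup {v : ℝ | ∃ ξ : Fin n → ℝ, (∀ i, ξ i ∈ Set.Icc (0:ℝ) 1) ∧
        v = ∑ i, a i * ξ i -
          Finset.univ.sup' ⟨⟨0, hn⟩, Finset.mem_univ _⟩ (fun i => ξ i * b i)} := by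
      apply le_csSup
      · refine ⟨v + 1 + 1, ?_⟩
        intro x hx
        obtain ⟨ξ, hξ, rfl⟩ := hx
        have h3 := weak ξ ν₀ hξ hν₀ hν₀1
        have h4 : v = ∑ i, max (a i - ν₀ i * b i) 0 := heq
        linarith
      · exact hvS
    linarith

theorem lower_bound_LP_duality {n : ℕ} (hn : 0 < n) (w p K : Fin n → ℝ) (K0 : ℝ)
    (hw : ∀ i, 0 < w i) (hp : ∀ i, 0 ≤ p i) (hK : ∀ i, 0 ≤ K i) (hK0 : 0 ≤ K0) :
    sSup {v : ℝ | ∃ ξ : Fin n → ℝ, (∀ i, ξ i ∈ Set.Icc (0:ℝ) 1) ∧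
        v = ∑ i, w i * p i * ξ i -
          Finset.univ.sup' ⟨⟨0, hn⟩, Finset.mem_univ _⟩
            (fun i => ξ i * max (K0 - w i * K i) 0)} =
    sInf {v : ℝ | ∃ ν : Fin n → ℝ, (∀ i, 0 ≤ ν i) ∧ (∑ i, ν i = 1) ∧
        v = ∑ i, max (w i * p i - ν i * max (K0 - w i * K i) 0) 0} := by
  exact lp_aux hn (fun i => w i * p i) (fun i => max (K0 - w i * K i) 0)
    (fun i => mul_nonneg (hw i).le (hp i)) (fun i => le_max_right _ _)
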